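/- Let T ∈ (0,1] and m ∈ (0,(π/(2T))²). Then M = m/(sec(√m T) − 1) is a Dirichlet eigenvalue of the problem z''(t) = −m z(−t) − M z(0) on [-T,T] with z(−T)=z(T)=0; i.e., there exists a nontrivial z ∈ C²([-T,T]) satisfying the equation and boundary conditions with this value of M. -/

import Mathlib

theorem stmt16 (T m : ℝ) (hT : 0 < T) (hT1 : T ≤ 1)
    (hm : 0 < m) (hm2 : m < (Real.pi / (2 * T)) ^ 2) :
    ∃ z : ℝ → ℝ, ContDiffOn ℝ 2 z (Set.Icc (-T) T) ∧
      (∃ t ∈ Set.Icc (-T) T, z t ≠ 0) ∧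
      (∀ t ∈ Set.Icc (-T) T,
        iteratedDerivWithin 2 z (Set.Icc (-T) T) t =
          -m * z (-t) - (m / (1 / Real.cos (Real.sqrt m * T) - 1)) * z 0) ∧
      z (-T) = 0 ∧ z T = 0 := by
  set k := Real.sqrt m with hk
  have hk0 : 0 < k := Real.sqrt_pos.mpr hm
  have hkT : k * T < Real.pi / 2 := by
    have h1 : k < Real.pi / (2 * T) := by
      have := Real.sqrt_lt_sqrt hm.le hm2
      rwa [Real.sqrt_sq (by positivity)] at this
    calc k * T < (Real.pi / (2 * T)) * T := by
          exact mul_lt_mul_of_pos_right h1 hT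
      _ = Real.pi / 2 := by field_simp
  have hkT0 : 0 < k * T := by positivity
  set c := Real.cos (k * T) with hc
  have hc0 : 0 < c := Real.cos_pos_of_mem_Ioo ⟨by linarith [Real.pi_pos], hkT⟩
  have hc1 : c < 1 := by
    have hsin : 0 < Real.sin (k * T) :=
      Real.sin_pos_of_pos_of_lt_pi hkT0 (by linarith [Real.pi_pos])
    nlinarith [Real.sin_sq_add_cos_sq (k * T), Real.cos_le_one (k * T)]
  set z : ℝ → ℝ := fun t => Real.cos (k * t) - c with hz
  have hd1 : ∀ x : ℝ, HasDerivAt z (-(Real.sin (k * x)) * k) x := by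
    intro x
    have h := (Real.hasDerivAt_cos (k * x)).comp x ((hasDerivAt_id x).const_mul k)
    simpa [hz] using h.sub_const c
  have hd2 : ∀ x : ℝ, HasDerivAt (fun x => -(Real.sin (k * x)) * k)
      (-(Real.cos (k * x)) * k * k) x := by
    intro x
    have h := (Real.hasDerivAt_sin (k * x)).comp x ((hasDerivAt_id x).const_mul k)
    have h2 : HasDerivAt (fun x => -Real.sin (k * x) * k)
        (-(Real.cos (k * x) * (k * 1)) * k) x := by
      simpa [Function.comp] using (h.neg.mul_const k)
    convert h2 using 1
    ring
  have hkk : k * k = m := Real.mul_self_sqrt hm.le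
  have hTT : -T < T := by linarith
  have hs : UniqueDiffOn ℝ (Set.Icc (-T) T) := uniqueDiffOn_Icc hTT
  refine ⟨z, ?_, ?_, ?_, ?_, ?_⟩
  · exact ((Real.contDiff_cos.comp (contDiff_const.mul contDiff_id)).sub
      contDiff_const).contDiffOn
  · refine ⟨0, by constructor <;> linarith, ?_⟩
    simp only [hz, mul_zero, Real.cos_zero]
    intro h
    have : c = 1 := by linarith
    linarith
  · intro t ht
    have key : iteratedDerivWithin 2 z (Set.Icc (-T) T) t = -(Real.cos (k * t)) * k * k := by
      rw [iteratedDerivWithin_succ', iteratedDerivWithin_one]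
      have hcongr : derivWithin (derivWithin z (Set.Icc (-T) T)) (Set.Icc (-T) T) t
          = derivWithin (fun x => -(Real.sin (k * x)) * k) (Set.Icc (-T) T) t := by
        apply derivWithin_congr
        · intro y hy
          rw [(hd1 y).differentiableAt.derivWithin (hs y hy), (hd1 y).deriv]
        · rw [(hd1 t).differentiableAt.derivWithin (hs t ht), (hd1 t).deriv]
      rw [hcongr, (hd2 t).differentiableAt.derivWithin (hs t ht), (hd2 t).deriv]
    rw [key]
    have hzneg : z (-t) = Real.cos (k * t) - c := by
      simp [hz, mul_comm, Real.cos_neg, mul_neg]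
    have hz0 : z 0 = 1 - c := by simp [hz]
    rw [hzneg, hz0]
    have hne2 : (1 : ℝ) - c ≠ 0 := by linarith
    have hrw : 1 / c - 1 = (1 - c) / c := by field_simp
    have hM : m / (1 / c - 1) * (1 - c) = m * c := by
      rw [hrw, div_div_eq_mul_div]
      field_simp
    rw [hM, ← hkk]
    ring
  · simp [hz, mul_comm, mul_neg, Real.cos_neg, hc]
  · simp [hz, hc]
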